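/- arXiv:2504.14413 — 2 statements merged into one kernel-verified Lean document; each statement's English description precedes it below -/
import Mathlib

section
/- Define the sequence u : ℕ → ℤ by u n = 4^n + 2, and for each k ∈ ℕ let n_k = (1 + 3^k)/2 (an integer since 3^k is odd). Then for all k ∈ ℕ, 3^(k+1) divides u(n_k). -/
lemma key_div (k : ℕ) : (3 : ℤ) ^ (k + 1) ∣ 2 ^ (3 ^ k) + 1 := by
  induction k with
  | zero => norm_num
  | succ k ih =>
    have hx : (2 : ℤ) ^ (3 ^ (k + 1)) + 1
        = (2 ^ (3 ^ k) + 1) * ((2 ^ (3 ^ k)) ^ 2 - 2 ^ (3 ^ k) + 1) := by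
      rw [pow_succ, pow_mul]
      ring
    have h3 : (3 : ℤ) ∣ (2 ^ (3 ^ k)) ^ 2 - 2 ^ (3 ^ k) + 1 := by
      have h2 : (2 : ℤ) ≡ -1 [ZMOD 3] := by decide
      have hodd : Odd (3 ^ k) := Odd.pow ⟨1, rfl⟩
      have h2' : (2 : ℤ) ^ (3 ^ k) ≡ -1 [ZMOD 3] := by
        calc (2:ℤ) ^ (3^k) ≡ (-1) ^ (3^k) [ZMOD 3] := h2.pow _
        _ = -1 := hodd.neg_one_pow
      have hm : ((2 : ℤ) ^ (3 ^ k)) ^ 2 - 2 ^ (3 ^ k) + 1 ≡ 0 [ZMOD 3] := by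
        calc ((2:ℤ)^(3^k))^2 - 2^(3^k) + 1 ≡ (-1)^2 - (-1) + 1 [ZMOD 3] :=
              ((h2'.pow 2).sub h2').add_right 1
        _ ≡ 0 [ZMOD 3] := by decide
      exact (Int.modEq_zero_iff_dvd).mp hm
    rw [hx, pow_succ]
    exact mul_dvd_mul ih h3

theorem stmt_1 (u : ℕ → ℤ) (hu : ∀ n, u n = 4 ^ n + 2) (k : ℕ) :
    (3 : ℤ) ^ (k + 1) ∣ u ((1 + 3 ^ k) / 2) := by
  rw [hu]
  have h2 : 2 * ((1 + 3 ^ k) / 2) = 1 + 3 ^ k := by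
    obtain ⟨m, hm⟩ : Odd ((3:ℕ) ^ k) := Odd.pow ⟨1, rfl⟩
    omega
  have h4 : (4 : ℤ) ^ ((1 + 3 ^ k) / 2) = 2 * 2 ^ (3 ^ k) := by
    rw [show (4 : ℤ) = 2 ^ 2 by norm_num, ← pow_mul, h2, pow_add, pow_one]
  rw [h4, show (2:ℤ) * 2 ^ 3 ^ k + 2 = 2 * (2 ^ 3 ^ k + 1) by ring]
  exact Dvd.dvd.mul_left (key_div k) 2
end

section
/- Let u : ℕ → ℤ be a sequence satisfying a linear recurrence of order d with integer coefficients whose characteristic roots λ₁, …, λ_s are units in ℤ_p (p a prime not dividing the last recurrence coefficient), and suppose u_n = Σ_{i=1}^s q_i(n)·λ_i^n for polynomials q_i with coefficients in ℤ_p. If N ≥ 1 satisfies v_p(λ_i^N − 1) > 1/(p−1) for all i, then for each 0 ≤ ℓ ≤ N−1 the function f_ℓ(x) = Σ_{i=1}^s q_i(N·x + ℓ)·λ_i^ℓ·exp(x·log(λ_i^N)) is a well-defined p-adic analytic function on ℤ_p satisfying f_ℓ(n) = u_{N·n+ℓ} for all n ∈ ℕ. -/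
variable (p : ℕ) [Fact p.Prime]

/-- The `p`-adic exponential, defined by its power series (junk value outside the
domain of convergence). -/
noncomputable def padicExp (x : ℚ_[p]) : ℚ_[p] :=
  ∑' n : ℕ, x ^ n / (n.factorial : ℚ_[p])

/-- The `p`-adic logarithm, defined by its power series (junk value outside the
domain of convergence). -/
noncomputable def padicLog (y : ℚ_[p]) : ℚ_[p] :=
  ∑' n : ℕ, (-1) ^ (n + 1) * (y - 1) ^ n / (n : ℚ_[p])

namespace PadicExpLog

open Filter Finset

/-- The radius of convergence `p^(-1/(p-1))`. -/
noncomputable def pr : ℝ := (p : ℝ) ^ (-(1 : ℝ) / ((p : ℝ) - 1))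

variable {p}

lemma one_lt_pR : (1 : ℝ) < p := by
  exact_mod_cast (Fact.out : p.Prime).one_lt

lemma pR_pos : (0 : ℝ) < p := lt_trans one_pos one_lt_pR

lemma psub_pos : (0 : ℝ) < (p : ℝ) - 1 := by linarith [one_lt_pR (p := p)]

lemma pr_pos : 0 < pr p := Real.rpow_pos_of_pos pR_pos _

lemma pr_lt_one : pr p < 1 := by
  apply Real.rpow_lt_one_of_one_lt_of_neg one_lt_pR
  have := psub_pos (p := p)
  rw [div_neg_iff]
  right
  constructor <;> linarith

lemma pr_le_one : pr p ≤ 1 := le_of_lt pr_lt_one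

lemma pr_inv_eq : (pr p)⁻¹ = (p : ℝ) ^ ((1 : ℝ) / ((p : ℝ) - 1)) := by
  rw [pr, ← Real.rpow_neg_one, ← Real.rpow_mul (le_of_lt pR_pos)]
  ring_nf

lemma one_le_pr_inv : 1 ≤ (pr p)⁻¹ := by
  rw [pr_inv_eq]
  exact Real.one_le_rpow one_lt_pR.le (div_nonneg zero_le_one psub_pos.le)

/-- The central norm estimate: if `(p-1) * v_p(m) ≤ j` then `‖(m : ℚ_[p])⁻¹‖ ≤ (pr p)⁻¹ ^ j`. -/
lemma norm_inv_le_of_padicValNat {m j : ℕ} (hm : m ≠ 0)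
    (h : (p - 1) * padicValNat p m ≤ j) :
    ‖((m : ℚ_[p]))⁻¹‖ ≤ (pr p)⁻¹ ^ j := by
  have hm' : ((m : ℚ_[p])) ≠ 0 := Nat.cast_ne_zero.2 hm
  rw [norm_inv, Padic.norm_eq_zpow_neg_valuation hm', Padic.valuation_natCast, ← zpow_neg, neg_neg]
  rw [pr_inv_eq, ← Real.rpow_natCast ((p:ℝ) ^ ((1:ℝ)/((p:ℝ)-1))) j,
    ← Real.rpow_mul (le_of_lt pR_pos), ← Real.rpow_intCast (p : ℝ)]
  rw [Real.rpow_le_rpow_left_iff one_lt_pR, Int.cast_natCast, div_mul_eq_mul_div,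
    le_div_iff₀ psub_pos, one_mul]
  have hcast : ((p - 1 : ℕ) : ℝ) = (p : ℝ) - 1 := by
    have h2 := (Fact.out : p.Prime).two_le
    rw [Nat.cast_sub (by omega : 1 ≤ p)]
    simp
  rw [mul_comm, ← hcast]
  exact_mod_cast h

lemma nat_bernoulli (a v : ℕ) : 1 + a * v ≤ (a + 1) ^ v := by
  induction v with
  | zero => simp
  | succ n ih =>
      have h1 : (1:ℕ) ≤ (a+1)^n := Nat.one_le_pow _ _ (Nat.succ_pos a)
      calc 1 + a * (n+1) = (1 + a * n) + a := by ring
        _ ≤ (a+1)^n + a * (a+1)^n := by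
            exact Nat.add_le_add ih (Nat.le_mul_of_pos_right a h1)
        _ = (a+1)^(n+1) := by ring

lemma sub_one_mul_padicValNat_le {j : ℕ} (hj : j ≠ 0) :
    (p - 1) * padicValNat p j ≤ j - 1 := by
  have hp2 : 2 ≤ p := (Fact.out : p.Prime).two_le
  have h1 : p ^ padicValNat p j ≤ j :=
    Nat.le_of_dvd (Nat.pos_of_ne_zero hj) pow_padicValNat_dvd
  have h2 : 1 + (p - 1) * padicValNat p j ≤ p ^ padicValNat p j := by
    have := nat_bernoulli (p - 1) (padicValNat p j)
    rwa [Nat.sub_add_cancel (le_trans one_le_two hp2)] at this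
  omega

lemma norm_nat_inv_le {j : ℕ} (hj : j ≠ 0) :
    ‖((j : ℚ_[p]))⁻¹‖ ≤ (pr p)⁻¹ ^ (j - 1) :=
  norm_inv_le_of_padicValNat hj (sub_one_mul_padicValNat_le hj)

lemma digits_sum_pos {k : ℕ} (hk : k ≠ 0) : 0 < (p.digits k).sum := by
  have hp2 : 2 ≤ p := (Fact.out : p.Prime).two_le
  have hne : p.digits k ≠ [] := Nat.digits_ne_nil_iff_ne_zero.2 hk
  have hmem : (p.digits k).getLast hne ∈ p.digits k := List.getLast_mem hne
  have hlast : (p.digits k).getLast hne ≠ 0 :=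
    Nat.getLast_digit_ne_zero p hk
  calc 0 < (p.digits k).getLast hne := Nat.pos_of_ne_zero hlast
    _ ≤ (p.digits k).sum := List.single_le_sum (fun _ _ => Nat.zero_le _) _ hmem

lemma norm_factorial_inv_le {k : ℕ} (hk : k ≠ 0) :
    ‖((k.factorial : ℚ_[p]))⁻¹‖ ≤ (pr p)⁻¹ ^ (k - 1) := by
  apply norm_inv_le_of_padicValNat k.factorial_ne_zero
  rw [sub_one_mul_padicValNat_factorial]
  have := digits_sum_pos (p := p) hk
  omega

lemma norm_factorial_inv_le' (k : ℕ) :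
    ‖((k.factorial : ℚ_[p]))⁻¹‖ ≤ (pr p)⁻¹ ^ k := by
  rcases Nat.eq_zero_or_pos k with rfl | hk
  · simp
  · exact le_trans (norm_factorial_inv_le hk.ne')
      (pow_le_pow_right₀ one_le_pr_inv (Nat.sub_le _ _))


section series
variable {z y : ℚ_[p]}

lemma delta_lt_one (hz : ‖z‖ < pr p) : ‖z‖ * (pr p)⁻¹ < 1 := by
  rw [← div_eq_mul_inv, div_lt_one pr_pos]
  exact hz

lemma delta_nonneg : 0 ≤ ‖z‖ * (pr p)⁻¹ :=
  mul_nonneg (norm_nonneg _) (inv_nonneg.2 pr_pos.le)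

lemma delta_le_one (hz : ‖z‖ < pr p) : ‖z‖ * (pr p)⁻¹ ≤ 1 := (delta_lt_one hz).le

/-- Norm bound for exp terms, `k ≠ 0`. -/
lemma norm_expTerm_le (hz : ‖z‖ < pr p) {k : ℕ} (hk : k ≠ 0) :
    ‖z ^ k / (k.factorial : ℚ_[p])‖ ≤ ‖z‖ * (‖z‖ * (pr p)⁻¹) ^ (k - 1) := by
  obtain ⟨m, rfl⟩ : ∃ m, k = m + 1 := ⟨k - 1, by omega⟩
  rw [div_eq_mul_inv, norm_mul, norm_pow, Nat.add_sub_cancel]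
  calc ‖z‖ ^ (m + 1) * ‖(((m + 1).factorial : ℚ_[p]))⁻¹‖
      ≤ ‖z‖ ^ (m + 1) * (pr p)⁻¹ ^ m := by
        have := norm_factorial_inv_le (p := p) (k := m + 1) (by omega)
        rw [Nat.add_sub_cancel] at this
        exact mul_le_mul_of_nonneg_left this (by positivity)
    _ = ‖z‖ * (‖z‖ * (pr p)⁻¹) ^ m := by rw [pow_succ, mul_pow]; ring

/-- Norm bound for log terms, `n ≠ 0`, where `t := y - 1`. -/
lemma norm_logTerm_le (hy : ‖y - 1‖ < pr p) {n : ℕ} (hn : n ≠ 0) :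
    ‖(-1) ^ (n + 1) * (y - 1) ^ n / (n : ℚ_[p])‖
      ≤ ‖y - 1‖ * (‖y - 1‖ * (pr p)⁻¹) ^ (n - 1) := by
  obtain ⟨m, rfl⟩ : ∃ m, n = m + 1 := ⟨n - 1, by omega⟩
  rw [div_eq_mul_inv, norm_mul, norm_mul, norm_pow, norm_pow, norm_neg, norm_one, one_pow,
    one_mul, Nat.add_sub_cancel]
  calc ‖y - 1‖ ^ (m + 1) * ‖(((m + 1 : ℕ) : ℚ_[p]))⁻¹‖
      ≤ ‖y - 1‖ ^ (m + 1) * (pr p)⁻¹ ^ m := by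
        have := norm_nat_inv_le (p := p) (j := m + 1) (by omega)
        rw [Nat.add_sub_cancel] at this
        exact mul_le_mul_of_nonneg_left this (by positivity)
    _ = ‖y - 1‖ * (‖y - 1‖ * (pr p)⁻¹) ^ m := by rw [pow_succ, mul_pow]; ring

/-- the geometric bound sequence tends to zero. -/
lemma tendsto_bound_aux {c δ : ℝ} (h0 : 0 ≤ δ) (h1 : δ < 1) :
    Tendsto (fun k : ℕ => c * δ ^ (k - 1)) atTop (nhds 0) := by
  have h := tendsto_pow_atTop_nhds_zero_of_lt_one h0 h1
  have h2 : Tendsto (fun k : ℕ => k - 1) atTop atTop :=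
    tendsto_atTop_atTop.2 fun b => ⟨b + 1, fun a ha => by omega⟩
  simpa using (h.comp h2).const_mul c

lemma summable_expTerm (hz : ‖z‖ < pr p) :
    Summable (fun k : ℕ => z ^ k / (k.factorial : ℚ_[p])) := by
  apply NonarchimedeanAddGroup.summable_of_tendsto_cofinite_zero
  rw [Nat.cofinite_eq_atTop]
  apply squeeze_zero_norm' (a := fun k : ℕ => ‖z‖ * (‖z‖ * (pr p)⁻¹) ^ (k - 1))
  · filter_upwards [eventually_ge_atTop 1] with k hk
    exact norm_expTerm_le hz (by omega)
  · exact tendsto_bound_aux delta_nonneg (delta_lt_one hz)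

lemma summable_logTerm (hy : ‖y - 1‖ < pr p) :
    Summable (fun n : ℕ => (-1) ^ (n + 1) * (y - 1) ^ n / (n : ℚ_[p])) := by
  apply NonarchimedeanAddGroup.summable_of_tendsto_cofinite_zero
  rw [Nat.cofinite_eq_atTop]
  apply squeeze_zero_norm' (a := fun n : ℕ => ‖y - 1‖ * (‖y - 1‖ * (pr p)⁻¹) ^ (n - 1))
  · filter_upwards [eventually_ge_atTop 1] with n hn
    exact norm_logTerm_le hy (by omega)
  · exact tendsto_bound_aux delta_nonneg (delta_lt_one hy)

lemma hasSum_expTerm (hz : ‖z‖ < pr p) :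
    HasSum (fun k : ℕ => z ^ k / (k.factorial : ℚ_[p])) (padicExp p z) :=
  (summable_expTerm hz).hasSum

lemma hasSum_logTerm (hy : ‖y - 1‖ < pr p) :
    HasSum (fun n : ℕ => (-1) ^ (n + 1) * (y - 1) ^ n / (n : ℚ_[p])) (padicLog p y) :=
  (summable_logTerm hy).hasSum

lemma padicExp_sub_one_sub_self (hz : ‖z‖ < pr p) :
    ‖padicExp p z - 1 - z‖ ≤ (pr p)⁻¹ * ‖z‖ ^ 2 := by
  have hs := summable_expTerm hz
  have h2 : HasSum (fun k : ℕ => z ^ (k + 2) / ((k + 2).factorial : ℚ_[p]))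
      (padicExp p z - 1 - z) := by
    rw [hasSum_nat_add_iff (f := fun k : ℕ => z ^ k / (k.factorial : ℚ_[p])) 2]
    have hS : ∑ i ∈ Finset.range 2, z ^ i / (i.factorial : ℚ_[p]) = 1 + z := by
      simp [Finset.sum_range_succ]
    rw [hS, show padicExp p z - 1 - z + (1 + z) = padicExp p z by ring]
    exact hasSum_expTerm hz
  rw [← h2.tsum_eq]
  apply IsUltrametricDist.norm_tsum_le_of_forall_le_of_nonneg
    (mul_nonneg (inv_nonneg.2 pr_pos.le) (by positivity))
  intro k
  calc ‖z ^ (k + 2) / ((k + 2).factorial : ℚ_[p])‖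
      ≤ ‖z‖ * (‖z‖ * (pr p)⁻¹) ^ (k + 1) := norm_expTerm_le hz (by omega)
    _ = ((pr p)⁻¹ * ‖z‖ ^ 2) * (‖z‖ * (pr p)⁻¹) ^ k := by ring
    _ ≤ ((pr p)⁻¹ * ‖z‖ ^ 2) * 1 := by
        apply mul_le_mul_of_nonneg_left _ (mul_nonneg (inv_nonneg.2 pr_pos.le) (by positivity))
        exact pow_le_one₀ delta_nonneg (delta_le_one hz)
    _ = (pr p)⁻¹ * ‖z‖ ^ 2 := mul_one _

lemma padicExp_sub_one_norm_le (hz : ‖z‖ < pr p) : ‖padicExp p z - 1‖ ≤ ‖z‖ := by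
  have h := padicExp_sub_one_sub_self hz
  have h2 : (pr p)⁻¹ * ‖z‖ ^ 2 ≤ ‖z‖ := by
    have := delta_le_one hz
    nlinarith [norm_nonneg z, pr_pos (p := p), inv_pos.2 (pr_pos (p := p))]
  calc ‖padicExp p z - 1‖ = ‖(padicExp p z - 1 - z) + z‖ := by ring_nf
    _ ≤ max ‖padicExp p z - 1 - z‖ ‖z‖ := IsUltrametricDist.norm_add_le_max _ _
    _ ≤ ‖z‖ := max_le (le_trans h h2) le_rfl

lemma padicLog_sub_self (hy : ‖y - 1‖ < pr p) :
    ‖padicLog p y - (y - 1)‖ ≤ (pr p)⁻¹ * ‖y - 1‖ ^ 2 := by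
  have hs := summable_logTerm hy
  have h2 : HasSum (fun n : ℕ => (-1) ^ (n + 2 + 1) * (y - 1) ^ (n + 2) / ((n + 2 : ℕ) : ℚ_[p]))
      (padicLog p y - (y - 1)) := by
    rw [hasSum_nat_add_iff
      (f := fun n : ℕ => (-1) ^ (n + 1) * (y - 1) ^ n / ((n : ℕ) : ℚ_[p])) 2]
    have hS : ∑ i ∈ Finset.range 2, (-1) ^ (i + 1) * (y - 1) ^ i / ((i : ℕ) : ℚ_[p]) = y - 1 := by
      simp [Finset.sum_range_succ]
    rw [hS, show padicLog p y - (y - 1) + (y - 1) = padicLog p y by ring]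
    exact hasSum_logTerm hy
  rw [← h2.tsum_eq]
  apply IsUltrametricDist.norm_tsum_le_of_forall_le_of_nonneg
    (mul_nonneg (inv_nonneg.2 pr_pos.le) (by positivity))
  intro n
  calc ‖(-1) ^ (n + 2 + 1) * (y - 1) ^ (n + 2) / ((n + 2 : ℕ) : ℚ_[p])‖
      ≤ ‖y - 1‖ * (‖y - 1‖ * (pr p)⁻¹) ^ (n + 1) := norm_logTerm_le hy (by omega)
    _ = ((pr p)⁻¹ * ‖y - 1‖ ^ 2) * (‖y - 1‖ * (pr p)⁻¹) ^ n := by ring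
    _ ≤ ((pr p)⁻¹ * ‖y - 1‖ ^ 2) * 1 := by
        apply mul_le_mul_of_nonneg_left _ (mul_nonneg (inv_nonneg.2 pr_pos.le) (by positivity))
        exact pow_le_one₀ delta_nonneg (delta_le_one hy)
    _ = (pr p)⁻¹ * ‖y - 1‖ ^ 2 := mul_one _

lemma padicLog_norm_le (hy : ‖y - 1‖ < pr p) : ‖padicLog p y‖ ≤ ‖y - 1‖ := by
  have h := padicLog_sub_self hy
  have h2 : (pr p)⁻¹ * ‖y - 1‖ ^ 2 ≤ ‖y - 1‖ := by
    have := delta_le_one hy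
    nlinarith [norm_nonneg (y - 1), inv_pos.2 (pr_pos (p := p))]
  calc ‖padicLog p y‖ = ‖(padicLog p y - (y - 1)) + (y - 1)‖ := by ring_nf
    _ ≤ max ‖padicLog p y - (y - 1)‖ ‖y - 1‖ := IsUltrametricDist.norm_add_le_max _ _
    _ ≤ ‖y - 1‖ := max_le (le_trans h h2) le_rfl

lemma padicLog_ne_zero (hy : ‖y - 1‖ < pr p) (hy1 : y ≠ 1) : padicLog p y ≠ 0 := by
  intro h
  have ht : 0 < ‖y - 1‖ := by
    rw [norm_pos_iff]
    exact sub_ne_zero.2 hy1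
  have h1 := padicLog_sub_self hy
  rw [h, zero_sub, norm_neg] at h1
  have h2 : (pr p)⁻¹ * ‖y - 1‖ ^ 2 < ‖y - 1‖ := by
    have hd := delta_lt_one hy
    nlinarith [inv_pos.2 (pr_pos (p := p))]
  linarith

end series

lemma padicExp_eq_exp (z : ℚ_[p]) : padicExp p z = NormedSpace.exp z := by
  rw [NormedSpace.exp_eq_tsum_div, padicExp]

lemma norm_natCast_le_one (m : ℕ) : ‖((m : ℚ_[p]))‖ ≤ 1 := by
  have := Padic.norm_int_le_one (p := p) (m : ℤ)
  push_cast at this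
  exact this

lemma ofReal_pr_le_radius :
    ENNReal.ofReal (pr p) ≤ (NormedSpace.expSeries ℚ_[p] ℚ_[p]).radius := by
  have h0 : (0 : ℝ) ≤ pr p := pr_pos.le
  show (((pr p).toNNReal : NNReal) : ENNReal) ≤ _
  apply FormalMultilinearSeries.le_radius_of_bound _ 1
  intro n
  rw [Real.coe_toNNReal _ h0]
  have hnorm : ‖NormedSpace.expSeries ℚ_[p] ℚ_[p] n‖ ≤ ‖(((n.factorial : ℚ_[p])))⁻¹‖ := by
    rw [NormedSpace.expSeries]
    refine le_trans (ContinuousMultilinearMap.opNorm_smul_le _ _) ?_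
    rcases n with _ | m
    · simp [ContinuousMultilinearMap.norm_mkPiAlgebraFin_zero]
    · calc ‖((((m+1).factorial : ℚ_[p])))⁻¹‖ * ‖ContinuousMultilinearMap.mkPiAlgebraFin ℚ_[p] (m+1) ℚ_[p]‖
          ≤ ‖((((m+1).factorial : ℚ_[p])))⁻¹‖ * 1 := by
            apply mul_le_mul_of_nonneg_left
              ContinuousMultilinearMap.norm_mkPiAlgebraFin_succ_le (norm_nonneg _)
        _ = _ := mul_one _
  calc ‖NormedSpace.expSeries ℚ_[p] ℚ_[p] n‖ * (pr p) ^ n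
      ≤ ‖(((n.factorial : ℚ_[p])))⁻¹‖ * (pr p) ^ n := by
        apply mul_le_mul_of_nonneg_right hnorm (by positivity)
    _ ≤ (pr p)⁻¹ ^ n * (pr p) ^ n := by
        apply mul_le_mul_of_nonneg_right (norm_factorial_inv_le' n) (by positivity)
    _ = 1 := by
        rw [← mul_pow, inv_mul_cancel₀ (ne_of_gt pr_pos), one_pow]

lemma mem_expBall {z : ℚ_[p]} (hz : ‖z‖ < pr p) :
    z ∈ Metric.eball (0 : ℚ_[p]) (NormedSpace.expSeries ℚ_[p] ℚ_[p]).radius := by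
  rw [EMetric.mem_ball, edist_dist, dist_zero_right]
  calc ENNReal.ofReal ‖z‖ < ENNReal.ofReal (pr p) := by
        rw [ENNReal.ofReal_lt_ofReal_iff pr_pos]
        exact hz
    _ ≤ _ := ofReal_pr_le_radius

lemma padicExp_add {x z : ℚ_[p]} (hx : ‖x‖ < pr p) (hz : ‖z‖ < pr p) :
    padicExp p (x + z) = padicExp p x * padicExp p z := by
  rw [padicExp_eq_exp, padicExp_eq_exp, padicExp_eq_exp]
  exact NormedSpace.exp_add_of_mem_ball (mem_expBall hx) (mem_expBall hz)

lemma padicExp_zero : padicExp p 0 = 1 := by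
  rw [padicExp_eq_exp]
  exact NormedSpace.exp_zero

lemma padicExp_nat_mul {z : ℚ_[p]} (hz : ‖z‖ < pr p) (m : ℕ) :
    padicExp p ((m : ℚ_[p]) * z) = (padicExp p z) ^ m := by
  induction m with
  | zero => simpa using padicExp_zero
  | succ n ih =>
      have hn : ‖(n : ℚ_[p]) * z‖ < pr p := by
        rw [norm_mul]
        calc ‖(n : ℚ_[p])‖ * ‖z‖ ≤ 1 * ‖z‖ :=
              mul_le_mul_of_nonneg_right (norm_natCast_le_one n) (norm_nonneg _)
          _ = ‖z‖ := one_mul _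
          _ < pr p := hz
      rw [show ((n + 1 : ℕ) : ℚ_[p]) * z = (n : ℚ_[p]) * z + z by push_cast; ring,
        padicExp_add hn hz, ih, pow_succ]

section powfacts
variable {y : ℚ_[p]}

lemma norm_eq_one_of (hy : ‖y - 1‖ < 1) : ‖y‖ = 1 := by
  have h1 : ‖y‖ ≤ 1 := by
    calc ‖y‖ = ‖(y - 1) + 1‖ := by ring_nf
      _ ≤ max ‖y - 1‖ ‖(1 : ℚ_[p])‖ := IsUltrametricDist.norm_add_le_max _ _
      _ ≤ 1 := by rw [norm_one]; exact max_le hy.le le_rfl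
  rcases lt_or_eq_of_le h1 with h | h
  · exfalso
    have : (1 : ℝ) = ‖y - (y - 1)‖ := by norm_num
    have h2 : ‖y - (y - 1)‖ ≤ max ‖y‖ ‖y - 1‖ := by
      rw [sub_eq_add_neg]
      refine le_trans (IsUltrametricDist.norm_add_le_max _ _) ?_
      rw [norm_neg]
    have h3 : max ‖y‖ ‖y - 1‖ < 1 := max_lt h hy
    linarith [this ▸ h2]
  · exact h

lemma norm_pow_sub_one_le (hy : ‖y - 1‖ < 1) (n : ℕ) : ‖y ^ n - 1‖ ≤ ‖y - 1‖ := by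
  induction n with
  | zero => simpa using norm_nonneg _
  | succ m ih =>
      have hy1 : ‖y‖ = 1 := norm_eq_one_of hy
      calc ‖y ^ (m + 1) - 1‖ = ‖(y ^ m - 1) * y + (y - 1)‖ := by ring_nf
        _ ≤ max ‖(y ^ m - 1) * y‖ ‖y - 1‖ := IsUltrametricDist.norm_add_le_max _ _
        _ ≤ ‖y - 1‖ := by
            apply max_le _ le_rfl
            rw [norm_mul, hy1, mul_one]
            exact ih

/-- The key contraction estimate: `‖y^p - 1‖ ≤ ‖y - 1‖ / p`. -/
lemma norm_pow_p_sub_one_le (hy : ‖y - 1‖ < pr p) :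
    ‖y ^ p - 1‖ ≤ ‖y - 1‖ * ((p : ℝ))⁻¹ := by
  have hp2 := (Fact.out : p.Prime).two_le
  have hy1 : ‖y - 1‖ < 1 := lt_of_lt_of_le hy pr_lt_one.le
  have hexp : y ^ p - 1 = ∑ i ∈ range p, (y - 1) ^ (i + 1) * 1 ^ (p - (i + 1)) * (p.choose (i + 1)) := by
    have hb := add_pow (y - 1) 1 p
    rw [sub_add_cancel] at hb
    rw [hb]
    rw [Finset.sum_range_succ' (fun m => (y - 1) ^ m * 1 ^ (p - m) * (p.choose m : ℚ_[p]))]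
    simp
  rw [hexp]
  apply IsUltrametricDist.norm_sum_le_of_forall_le_of_nonneg
    (mul_nonneg (norm_nonneg _) (by positivity))
  intro i hi
  rw [mem_range] at hi
  rw [one_pow, mul_one, norm_mul, norm_pow]
  have htle : ‖y - 1‖ ^ (i + 1) ≤ ‖y - 1‖ := by
    calc ‖y - 1‖ ^ (i + 1) ≤ ‖y - 1‖ ^ 1 :=
          pow_le_pow_of_le_one (norm_nonneg _) hy1.le (by omega)
      _ = ‖y - 1‖ := pow_one _
  rcases eq_or_ne (i + 1) p with hip | hip
  · -- top term : ‖(y-1)^p‖ ≤ ‖y-1‖ * p⁻¹, choose = 1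
    rw [hip, Nat.choose_self]
    have hfac : ‖y - 1‖ ^ p ≤ ‖y - 1‖ * (p : ℝ)⁻¹ := by
      have hsplit : ‖y - 1‖ * ‖y - 1‖ ^ (p - 1) = ‖y - 1‖ ^ p := by
        rw [← pow_succ']
        congr 1
        omega
      rw [← hsplit]
      apply mul_le_mul_of_nonneg_left _ (norm_nonneg _)
      calc ‖y - 1‖ ^ (p - 1) ≤ (pr p) ^ (p - 1) :=
            pow_le_pow_left₀ (norm_nonneg _) hy.le _
        _ = (p : ℝ)⁻¹ := by
            rw [pr, ← Real.rpow_natCast ((p:ℝ) ^ (-(1:ℝ)/((p:ℝ)-1))) (p-1),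
              ← Real.rpow_mul (by positivity)]
            have hcast : ((p - 1 : ℕ) : ℝ) = (p : ℝ) - 1 := by
              rw [Nat.cast_sub (by omega : 1 ≤ p)]; simp
            rw [hcast, div_mul_eq_mul_div, neg_one_mul, neg_div,
              div_self (by
                have : (1:ℝ) < p := by exact_mod_cast hp2
                linarith), Real.rpow_neg_one]
    simpa using hfac
  · -- middle terms : p ∣ choose
    have hdvd : p ∣ p.choose (i + 1) :=
      (Fact.out : p.Prime).dvd_choose_self (by omega) (by omega)
    obtain ⟨c, hc⟩ := hdvd
    have hnc : ‖((p.choose (i + 1) : ℕ) : ℚ_[p])‖ ≤ (p : ℝ)⁻¹ := by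
      rw [hc]
      push_cast
      rw [norm_mul, Padic.norm_p]
      calc (p : ℝ)⁻¹ * ‖((c : ℕ) : ℚ_[p])‖ ≤ (p : ℝ)⁻¹ * 1 :=
            mul_le_mul_of_nonneg_left (norm_natCast_le_one c) (by positivity)
        _ = (p : ℝ)⁻¹ := mul_one _
    calc ‖y - 1‖ ^ (i + 1) * ‖((p.choose (i + 1) : ℕ) : ℚ_[p])‖
        ≤ ‖y - 1‖ * (p : ℝ)⁻¹ :=
          mul_le_mul htle hnc (norm_nonneg _) (norm_nonneg _)

lemma norm_pow_pk_sub_one_le (hy : ‖y - 1‖ < pr p) (k : ℕ) :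
    ‖y ^ (p ^ k) - 1‖ ≤ ‖y - 1‖ * ((p : ℝ))⁻¹ ^ k := by
  induction k with
  | zero => simpa using norm_pow_sub_one_le (lt_of_lt_of_le hy pr_lt_one.le) 1
  | succ m ih =>
      have hyk : ‖y ^ (p ^ m) - 1‖ < pr p := by
        calc ‖y ^ (p ^ m) - 1‖ ≤ ‖y - 1‖ * ((p:ℝ))⁻¹ ^ m := ih
          _ ≤ ‖y - 1‖ * 1 := by
              apply mul_le_mul_of_nonneg_left _ (norm_nonneg _)
              apply pow_le_one₀ (by positivity)
              rw [inv_le_one_iff₀]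
              right
              exact_mod_cast (Fact.out : p.Prime).one_le
          _ = ‖y - 1‖ := mul_one _
          _ < pr p := hy
      calc ‖y ^ (p ^ (m + 1)) - 1‖ = ‖(y ^ (p ^ m)) ^ p - 1‖ := by rw [← pow_mul, pow_succ]
        _ ≤ ‖y ^ (p ^ m) - 1‖ * (p : ℝ)⁻¹ := norm_pow_p_sub_one_le hyk
        _ ≤ (‖y - 1‖ * ((p:ℝ))⁻¹ ^ m) * (p : ℝ)⁻¹ :=
            mul_le_mul_of_nonneg_right ih (by positivity)
        _ = ‖y - 1‖ * ((p:ℝ))⁻¹ ^ (m + 1) := by ring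

lemma tendsto_pow_pk (hy : ‖y - 1‖ < pr p) :
    Tendsto (fun k : ℕ => y ^ (p ^ k)) atTop (nhds 1) := by
  have h : Tendsto (fun k : ℕ => y ^ (p ^ k) - 1) atTop (nhds 0) := by
    apply squeeze_zero_norm (fun k => norm_pow_pk_sub_one_le hy k)
    have hp1 : (p : ℝ)⁻¹ < 1 := by
      rw [inv_lt_one_iff₀]
      right
      exact_mod_cast (Fact.out : p.Prime).one_lt
    simpa using (tendsto_pow_atTop_nhds_zero_of_lt_one (by positivity) hp1).const_mul ‖y - 1‖
  have := h.add_const 1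
  simpa using this

end powfacts

lemma norm_sub_le_max (x z : ℚ_[p]) : ‖x - z‖ ≤ max ‖x‖ ‖z‖ := by
  rw [sub_eq_add_neg]
  refine le_trans (IsUltrametricDist.norm_add_le_max _ _) ?_
  rw [norm_neg]

/-- `C(p^k, i+1) / p^k = C(p^k - 1, i) / (i+1)` in `ℚ_[p]`. -/
lemma cast_choose_div_eq (k i : ℕ) :
    (((p ^ k).choose (i + 1) : ℕ) : ℚ_[p]) / ((p : ℚ_[p])) ^ k
      = (((p ^ k - 1).choose i : ℕ) : ℚ_[p]) / (((i + 1 : ℕ)) : ℚ_[p]) := by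
  have hppos : 0 < p ^ k := Nat.pow_pos (Fact.out : p.Prime).pos
  have hnat : p ^ k * (p ^ k - 1).choose i = (p ^ k).choose (i + 1) * (i + 1) := by
    have h := Nat.add_one_mul_choose_eq (p ^ k - 1) i
    have hs : p ^ k - 1 + 1 = p ^ k := by omega
    simpa [Nat.succ_eq_add_one, hs] using h
  have hcast : ((p : ℚ_[p])) ^ k * (((p ^ k - 1).choose i : ℕ) : ℚ_[p])
      = (((p ^ k).choose (i + 1) : ℕ) : ℚ_[p]) * (((i + 1 : ℕ)) : ℚ_[p]) := by
    exact_mod_cast congrArg (fun m : ℕ => (m : ℚ_[p])) hnat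
  have hp0 : ((p : ℚ_[p])) ^ k ≠ 0 := by
    apply pow_ne_zero
    exact_mod_cast (Fact.out : p.Prime).ne_zero
  have hi0 : (((i + 1 : ℕ)) : ℚ_[p]) ≠ 0 := Nat.cast_ne_zero.2 (by omega : i + 1 ≠ 0)
  rw [div_eq_div_iff hp0 hi0]
  linear_combination -hcast

lemma norm_choose_div_le {y : ℚ_[p]} (k i : ℕ) :
    ‖(y - 1) ^ (i + 1) * (((p ^ k).choose (i + 1) : ℕ) : ℚ_[p]) / ((p : ℚ_[p])) ^ k‖
      ≤ ‖y - 1‖ * (‖y - 1‖ * (pr p)⁻¹) ^ i := by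
  rw [mul_div_assoc, cast_choose_div_eq, div_eq_mul_inv, norm_mul, norm_mul, norm_pow]
  calc ‖y - 1‖ ^ (i + 1) * (‖(((p ^ k - 1).choose i : ℕ) : ℚ_[p])‖ * ‖(((i + 1 : ℕ)) : ℚ_[p])⁻¹‖)
      ≤ ‖y - 1‖ ^ (i + 1) * (1 * (pr p)⁻¹ ^ i) := by
        apply mul_le_mul_of_nonneg_left _ (by positivity)
        apply mul_le_mul (norm_natCast_le_one _) _ (norm_nonneg _) zero_le_one
        have := norm_nat_inv_le (p := p) (j := i + 1) (by omega)
        rwa [Nat.add_sub_cancel] at this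
    _ = ‖y - 1‖ * (‖y - 1‖ * (pr p)⁻¹) ^ i := by
        rw [pow_succ, mul_pow]
        ring

/-- Termwise limit : `(y-1)^(i+1) C(p^k, i+1)/p^k → (-1)^i (y-1)^(i+1)/(i+1)`. -/
lemma tendsto_choose_term {y : ℚ_[p]} (i : ℕ) :
    Tendsto (fun k : ℕ => (y - 1) ^ (i + 1) * (((p ^ k).choose (i + 1) : ℕ) : ℚ_[p])
        / ((p : ℚ_[p])) ^ k) atTop
      (nhds ((-1) ^ (i + 1 + 1) * (y - 1) ^ (i + 1) / (((i + 1 : ℕ)) : ℚ_[p]))) := by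
  have hp1 : 1 < p := (Fact.out : p.Prime).one_lt
  have hi0 : (((i + 1 : ℕ)) : ℚ_[p]) ≠ 0 :=
    Nat.cast_ne_zero.2 (by omega : i + 1 ≠ 0)
  have hfac0 : ((i.factorial : ℕ) : ℚ_[p]) ≠ 0 :=
    Nat.cast_ne_zero.2 i.factorial_ne_zero
  -- the polynomial map
  set Φ : ℚ_[p] → ℚ_[p] := fun x =>
    (y - 1) ^ (i + 1) * ((∏ m ∈ range i, (x - ((m + 1 : ℕ) : ℚ_[p]))) / ((i.factorial : ℕ) : ℚ_[p]))
      / (((i + 1 : ℕ)) : ℚ_[p]) with hΦ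
  have hcont : Continuous Φ := by
    apply Continuous.div_const
    apply Continuous.mul continuous_const
    apply Continuous.div_const
    exact continuous_finset_prod _ (fun m _ => continuous_id.sub continuous_const)
  have hx : Tendsto (fun k : ℕ => ((p : ℚ_[p])) ^ k) atTop (nhds 0) := by
    apply tendsto_pow_atTop_nhds_zero_of_norm_lt_one
    rw [Padic.norm_p]
    rw [inv_lt_one_iff₀]
    right
    exact_mod_cast hp1
  have hval : Φ 0 = (-1) ^ (i + 1 + 1) * (y - 1) ^ (i + 1) / (((i + 1 : ℕ)) : ℚ_[p]) := by
    rw [hΦ]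
    have hprod : (∏ m ∈ range i, ((0 : ℚ_[p]) - ((m + 1 : ℕ) : ℚ_[p])))
        = (-1) ^ i * ((i.factorial : ℕ) : ℚ_[p]) := by
      have h1 : ∀ m ∈ range i, (0 : ℚ_[p]) - ((m + 1 : ℕ) : ℚ_[p])
          = (-1) * ((m + 1 : ℕ) : ℚ_[p]) := by
        intro m _
        ring
      rw [Finset.prod_congr rfl h1, Finset.prod_mul_distrib, Finset.prod_const, card_range]
      congr 1
      rw [← Nat.cast_prod]
      congr 1
      exact Finset.prod_range_add_one_eq_factorial i
    simp only
    rw [hprod]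
    field_simp
    ring
  have hev : ∀ᶠ k in atTop, Φ (((p : ℚ_[p])) ^ k)
      = (y - 1) ^ (i + 1) * (((p ^ k).choose (i + 1) : ℕ) : ℚ_[p]) / ((p : ℚ_[p])) ^ k := by
    rw [eventually_atTop]
    refine ⟨i + 1, fun k hk => ?_⟩
    have hik : i + 1 ≤ p ^ k := by
      calc i + 1 ≤ k := hk
        _ ≤ p ^ k := (Nat.lt_pow_self (n := k) hp1).le
    -- descFactorial as a product of casts
    have hdesc : (((p ^ k - 1).descFactorial i : ℕ) : ℚ_[p])
        = ∏ m ∈ range i, (((p : ℚ_[p])) ^ k - ((m + 1 : ℕ) : ℚ_[p])) := by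
      rw [Nat.descFactorial_eq_prod_range, Nat.cast_prod]
      apply Finset.prod_congr rfl
      intro m hm
      rw [mem_range] at hm
      have h1 : p ^ k - 1 - m = p ^ k - (m + 1) := by omega
      rw [h1, Nat.cast_sub (by omega : m + 1 ≤ p ^ k)]
      push_cast
      ring
    have hchoose : (((p ^ k - 1).choose i : ℕ) : ℚ_[p])
        = (∏ m ∈ range i, (((p : ℚ_[p])) ^ k - ((m + 1 : ℕ) : ℚ_[p]))) / ((i.factorial : ℕ) : ℚ_[p]) := by
      rw [← hdesc, Nat.descFactorial_eq_factorial_mul_choose]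
      push_cast
      field_simp
    have hkey : (((p ^ k).choose (i + 1) : ℕ) : ℚ_[p]) / ((p : ℚ_[p])) ^ k
        = (∏ m ∈ range i, (((p : ℚ_[p])) ^ k - ((m + 1 : ℕ) : ℚ_[p])))
          / ((i.factorial : ℕ) : ℚ_[p]) / (((i + 1 : ℕ)) : ℚ_[p]) := by
      rw [cast_choose_div_eq, hchoose]
    rw [hΦ]
    simp only
    rw [mul_div_assoc, mul_div_assoc, hkey, div_div]
  have := (hcont.tendsto 0).comp hx
  rw [hval] at this
  exact this.congr' hev

/-- The limit formula : `(y^{p^k} - 1)/p^k → log y`. -/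
lemma tendsto_limS {y : ℚ_[p]} (hy : ‖y - 1‖ < pr p) :
    Tendsto (fun k : ℕ => (y ^ p ^ k - 1) / ((p : ℚ_[p])) ^ k) atTop (nhds (padicLog p y)) := by
  have hp1 : 1 < p := (Fact.out : p.Prime).one_lt
  set τ : ℝ := ‖y - 1‖ with hτ
  set δ : ℝ := ‖y - 1‖ * (pr p)⁻¹ with hδ
  have hδ0 : 0 ≤ δ := delta_nonneg
  have hδ1 : δ < 1 := delta_lt_one hy
  -- the two families
  set a : ℕ → ℕ → ℚ_[p] := fun k i =>
    (y - 1) ^ (i + 1) * (((p ^ k).choose (i + 1) : ℕ) : ℚ_[p]) / ((p : ℚ_[p])) ^ k with ha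
  set b : ℕ → ℚ_[p] := fun i =>
    (-1) ^ (i + 1 + 1) * (y - 1) ^ (i + 1) / (((i + 1 : ℕ)) : ℚ_[p]) with hb
  have hb_sum : Summable b := by
    have := (summable_nat_add_iff
      (f := fun n : ℕ => (-1 : ℚ_[p]) ^ (n + 1) * (y - 1) ^ n / ((n : ℕ) : ℚ_[p])) 1).2
      (summable_logTerm hy)
    exact this
  have hb_norm : ∀ i, ‖b i‖ ≤ τ * δ ^ i := by
    intro i
    have := norm_logTerm_le hy (n := i + 1) (by omega)
    rwa [Nat.add_sub_cancel] at this
  have ha_norm : ∀ k i, ‖a k i‖ ≤ τ * δ ^ i := fun k i => norm_choose_div_le k i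
  -- Step A : finite sum representation
  have hrepr : ∀ k : ℕ, (y ^ p ^ k - 1) / ((p : ℚ_[p])) ^ k = ∑ i ∈ range (p ^ k), a k i := by
    intro k
    have hbinom : y ^ p ^ k - 1
        = ∑ i ∈ range (p ^ k), (y - 1) ^ (i + 1) * (((p ^ k).choose (i + 1) : ℕ) : ℚ_[p]) := by
      have hbp := add_pow (y - 1) 1 (p ^ k)
      rw [sub_add_cancel] at hbp
      rw [hbp]
      rw [Finset.sum_range_succ'
        (fun m => (y - 1) ^ m * 1 ^ (p ^ k - m) * ((p ^ k).choose m : ℚ_[p]))]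
      simp
    rw [hbinom, Finset.sum_div]
  -- Step B : series representation
  have hlog : padicLog p y = ∑' i, b i := by
    rw [padicLog, (summable_logTerm hy).tsum_eq_zero_add,
      show ((-1 : ℚ_[p]) ^ (0 + 1) * (y - 1) ^ 0 / ((0 : ℕ) : ℚ_[p])) = 0 from by norm_num,
      zero_add]
  -- termwise limits
  have hterm : ∀ i, Tendsto (fun k => a k i) atTop (nhds (b i)) := fun i => tendsto_choose_term i
  -- epsilon argument
  rw [Metric.tendsto_atTop]
  intro ε hε
  set ε' : ℝ := ε / 2 with hε'def
  have hε' : 0 < ε' := by positivity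
  -- choose J
  have hgeom : Tendsto (fun i : ℕ => τ * δ ^ i) atTop (nhds 0) := by
    simpa using (tendsto_pow_atTop_nhds_zero_of_lt_one hδ0 hδ1).const_mul τ
  obtain ⟨J, hJ⟩ := Metric.tendsto_atTop.1 hgeom ε' hε'
  have hJ' : ∀ i, J ≤ i → τ * δ ^ i < ε' := by
    intro i hi
    have := hJ i hi
    rw [Real.dist_eq, sub_zero] at this
    calc τ * δ ^ i ≤ |τ * δ ^ i| := le_abs_self _
      _ < ε' := this
  -- eventual facts
  have hev1 : ∀ᶠ k in atTop, ∀ i ∈ range J, ‖a k i - b i‖ < ε' := by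
    rw [eventually_all_finset]
    intro i _
    have h := Metric.tendsto_atTop.1 (hterm i) ε' hε'
    obtain ⟨N, hN⟩ := h
    rw [eventually_atTop]
    exact ⟨N, fun k hk => by
      have := hN k hk
      rwa [dist_eq_norm] at this⟩
  have hev2 : ∀ᶠ k in atTop, J ≤ p ^ k := by
    rw [eventually_atTop]
    exact ⟨J, fun k hk => le_trans hk (Nat.lt_pow_self (n := k) hp1).le⟩
  obtain ⟨N, hN⟩ := eventually_atTop.1 (hev1.and hev2)
  refine ⟨N, fun k hk => ?_⟩
  obtain ⟨hNk1, hNk2⟩ := hN k hk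
  rw [dist_eq_norm, hrepr, hlog]
  -- split both sums at J
  rw [← Finset.sum_range_add_sum_Ico (a k) hNk2, ← hb_sum.sum_add_tsum_nat_add J]
  have hkey : ∑ i ∈ range J, a k i + ∑ i ∈ Ico J (p ^ k), a k i
      - (∑ i ∈ range J, b i + ∑' i, b (i + J))
      = (∑ i ∈ range J, (a k i - b i)) + (∑ i ∈ Ico J (p ^ k), a k i - ∑' i, b (i + J)) := by
    rw [Finset.sum_sub_distrib]
    ring
  rw [hkey]
  have hA : ‖∑ i ∈ range J, (a k i - b i)‖ ≤ ε' :=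
    IsUltrametricDist.norm_sum_le_of_forall_le_of_nonneg hε'.le
      (fun i hi => (hNk1 i hi).le)
  have hB : ‖∑ i ∈ Ico J (p ^ k), a k i‖ ≤ ε' := by
    apply IsUltrametricDist.norm_sum_le_of_forall_le_of_nonneg hε'.le
    intro i hi
    rw [mem_Ico] at hi
    exact le_trans (ha_norm k i) (hJ' i hi.1).le
  have hC : ‖∑' i, b (i + J)‖ ≤ ε' := by
    apply IsUltrametricDist.norm_tsum_le_of_forall_le_of_nonneg hε'.le
    intro i
    calc ‖b (i + J)‖ ≤ τ * δ ^ (i + J) := hb_norm _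
      _ ≤ ε' := (hJ' _ (by omega)).le
  calc ‖(∑ i ∈ range J, (a k i - b i)) + (∑ i ∈ Ico J (p ^ k), a k i - ∑' i, b (i + J))‖
      ≤ max ‖∑ i ∈ range J, (a k i - b i)‖ ‖∑ i ∈ Ico J (p ^ k), a k i - ∑' i, b (i + J)‖ :=
        IsUltrametricDist.norm_add_le_max _ _
    _ ≤ max ε' (max ‖∑ i ∈ Ico J (p ^ k), a k i‖ ‖∑' i, b (i + J)‖) := by
        apply max_le_max hA
        exact norm_sub_le_max _ _
    _ ≤ ε' := by
        apply max_le le_rfl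
        exact max_le hB hC
    _ < ε := by
        rw [hε'def]
        linarith


variable {y z : ℚ_[p]}

lemma mul_mem_ball (hy : ‖y - 1‖ < pr p) (hz : ‖z - 1‖ < pr p) : ‖y * z - 1‖ < pr p := by
  have hz1 : ‖z‖ = 1 := norm_eq_one_of (lt_of_lt_of_le hz pr_lt_one.le)
  have h : y * z - 1 = (y - 1) * z + (z - 1) := by ring
  rw [h]
  calc ‖(y - 1) * z + (z - 1)‖ ≤ max ‖(y - 1) * z‖ ‖z - 1‖ :=
        IsUltrametricDist.norm_add_le_max _ _
    _ < pr p := by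
        rw [norm_mul, hz1, mul_one]
        exact max_lt hy hz

lemma padicLog_one : padicLog p (1 : ℚ_[p]) = 0 := by
  rw [padicLog]
  have h : ∀ n : ℕ, (-1 : ℚ_[p]) ^ (n + 1) * ((1 : ℚ_[p]) - 1) ^ n / (n : ℚ_[p]) = 0 := by
    intro n
    rcases n with _ | m
    · norm_num
    · rw [sub_self, zero_pow (by omega : m + 1 ≠ 0)]
      simp
  rw [tsum_congr h, tsum_zero]

lemma padicLog_mul (hy : ‖y - 1‖ < pr p) (hz : ‖z - 1‖ < pr p) :
    padicLog p (y * z) = padicLog p y + padicLog p z := by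
  have hyz : ‖y * z - 1‖ < pr p := mul_mem_ball hy hz
  have hp0 : ∀ k : ℕ, ((p : ℚ_[p])) ^ k ≠ 0 := by
    intro k
    apply pow_ne_zero
    exact_mod_cast (Fact.out : p.Prime).ne_zero
  have h1 : Tendsto (fun k : ℕ => ((y * z) ^ p ^ k - 1) / ((p : ℚ_[p])) ^ k) atTop
      (nhds (padicLog p y * 1 + padicLog p z)) := by
    have h2 := ((tendsto_limS hy).mul (tendsto_pow_pk hz)).add (tendsto_limS hz)
    apply h2.congr
    intro k
    rw [mul_pow]
    field_simp
    ring
  have h3 := tendsto_limS hyz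
  have := tendsto_nhds_unique h3 h1
  rw [this, mul_one]

lemma padicLog_pow (hy : ‖y - 1‖ < pr p) (n : ℕ) :
    padicLog p (y ^ n) = (n : ℚ_[p]) * padicLog p y := by
  induction n with
  | zero => simpa using padicLog_one
  | succ m ih =>
      have hym : ‖y ^ m - 1‖ < pr p :=
        lt_of_le_of_lt (norm_pow_sub_one_le (lt_of_lt_of_le hy pr_lt_one.le) m) hy
      rw [pow_succ, padicLog_mul hym hy, ih]
      push_cast
      ring

lemma norm_p_real : ‖((p : ℚ_[p]))‖ = ((p : ℝ))⁻¹ := Padic.norm_p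

lemma padicLog_padicExp {w : ℚ_[p]} (hw : ‖w‖ < pr p) :
    padicLog p (padicExp p w) = w := by
  have hpinv_lt : ((p : ℝ))⁻¹ ≤ 1 := by
    rw [inv_le_one_iff₀]
    right
    exact_mod_cast (Fact.out : p.Prime).one_le
  have hscale : ∀ k : ℕ, ‖((p : ℚ_[p])) ^ k * w‖ = ((p : ℝ))⁻¹ ^ k * ‖w‖ := by
    intro k
    rw [norm_mul, norm_pow, norm_p_real]
  have hscale_lt : ∀ k : ℕ, ‖((p : ℚ_[p])) ^ k * w‖ < pr p := by
    intro k
    rw [hscale]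
    calc ((p : ℝ))⁻¹ ^ k * ‖w‖ ≤ 1 * ‖w‖ := by
          apply mul_le_mul_of_nonneg_right _ (norm_nonneg _)
          exact pow_le_one₀ (by positivity) hpinv_lt
      _ = ‖w‖ := one_mul _
      _ < pr p := hw
  -- the defect function bound
  have hg_bound : ∀ v : ℚ_[p], ‖v‖ < pr p →
      ‖padicLog p (padicExp p v) - v‖ ≤ (pr p)⁻¹ * ‖v‖ ^ 2 := by
    intro v hv
    have hE : ‖padicExp p v - 1‖ ≤ ‖v‖ := padicExp_sub_one_norm_le hv
    have hE' : ‖padicExp p v - 1‖ < pr p := lt_of_le_of_lt hE hv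
    have h1 : ‖padicLog p (padicExp p v) - (padicExp p v - 1)‖
        ≤ (pr p)⁻¹ * ‖padicExp p v - 1‖ ^ 2 := padicLog_sub_self hE'
    have h2 : ‖padicExp p v - 1 - v‖ ≤ (pr p)⁻¹ * ‖v‖ ^ 2 := padicExp_sub_one_sub_self hv
    have hsq : (pr p)⁻¹ * ‖padicExp p v - 1‖ ^ 2 ≤ (pr p)⁻¹ * ‖v‖ ^ 2 := by
      apply mul_le_mul_of_nonneg_left _ (inv_nonneg.2 pr_pos.le)
      exact pow_le_pow_left₀ (norm_nonneg _) hE 2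
    calc ‖padicLog p (padicExp p v) - v‖
        = ‖(padicLog p (padicExp p v) - (padicExp p v - 1)) + (padicExp p v - 1 - v)‖ := by
          ring_nf
      _ ≤ max ‖padicLog p (padicExp p v) - (padicExp p v - 1)‖ ‖padicExp p v - 1 - v‖ :=
          IsUltrametricDist.norm_add_le_max _ _
      _ ≤ (pr p)⁻¹ * ‖v‖ ^ 2 := max_le (le_trans h1 hsq) h2
  -- recursion
  set g : ℚ_[p] → ℚ_[p] := fun v => padicLog p (padicExp p v) - v with hg
  have hgrec : ∀ v : ℚ_[p], ‖v‖ < pr p → g ((p : ℚ_[p]) * v) = (p : ℚ_[p]) * g v := by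
    intro v hv
    have hE' : ‖padicExp p v - 1‖ < pr p := lt_of_le_of_lt (padicExp_sub_one_norm_le hv) hv
    have h1 : padicExp p ((p : ℚ_[p]) * v) = (padicExp p v) ^ p := padicExp_nat_mul hv p
    rw [hg]
    simp only
    rw [h1, padicLog_pow hE' p]
    ring
  have hiter : ∀ k : ℕ, g ((p : ℚ_[p]) ^ k * w) = (p : ℚ_[p]) ^ k * g w := by
    intro k
    induction k with
    | zero => simp
    | succ m ih =>
        have h1 : ((p : ℚ_[p])) ^ (m + 1) * w = (p : ℚ_[p]) * (((p : ℚ_[p])) ^ m * w) := by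
          ring
        rw [h1, hgrec _ (hscale_lt m), ih, pow_succ]
        ring
  have hfinal : ∀ k : ℕ, ‖g w‖ ≤ ((p : ℝ))⁻¹ ^ k * ((pr p)⁻¹ * ‖w‖ ^ 2) := by
    intro k
    have hppos : (0 : ℝ) < ((p : ℝ))⁻¹ ^ k := by
      have : (0:ℝ) < p := by exact_mod_cast (Fact.out : p.Prime).pos
      positivity
    apply le_of_mul_le_mul_left _ hppos
    calc ((p : ℝ))⁻¹ ^ k * ‖g w‖ = ‖(p : ℚ_[p]) ^ k * g w‖ := by
          rw [norm_mul, norm_pow, norm_p_real]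
      _ = ‖g ((p : ℚ_[p]) ^ k * w)‖ := by rw [hiter k]
      _ ≤ (pr p)⁻¹ * ‖(p : ℚ_[p]) ^ k * w‖ ^ 2 := hg_bound _ (hscale_lt k)
      _ = (pr p)⁻¹ * (((p : ℝ))⁻¹ ^ k * ‖w‖) ^ 2 := by rw [hscale]
      _ ≤ ((p : ℝ))⁻¹ ^ k * (((p : ℝ))⁻¹ ^ k * ((pr p)⁻¹ * ‖w‖ ^ 2)) := by
          rw [mul_pow]
          have h1 : ((p : ℝ))⁻¹ ^ k ≤ 1 := pow_le_one₀ (by positivity) hpinv_lt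
          have h2 : (0 : ℝ) ≤ (pr p)⁻¹ * ‖w‖ ^ 2 :=
            mul_nonneg (inv_nonneg.2 pr_pos.le) (by positivity)
          nlinarith [hppos, sq_nonneg (((p : ℝ))⁻¹ ^ k)]
  have hlim : Tendsto (fun k : ℕ => ((p : ℝ))⁻¹ ^ k * ((pr p)⁻¹ * ‖w‖ ^ 2)) atTop (nhds 0) := by
    have hp1 : ((p : ℝ))⁻¹ < 1 := by
      rw [inv_lt_one_iff₀]
      right
      exact_mod_cast (Fact.out : p.Prime).one_lt
    simpa using (tendsto_pow_atTop_nhds_zero_of_lt_one (by positivity) hp1).mul_const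
      ((pr p)⁻¹ * ‖w‖ ^ 2)
  have hzero : ‖g w‖ ≤ 0 := ge_of_tendsto' hlim hfinal
  have : g w = 0 := by
    rw [← norm_le_zero_iff]
    exact hzero
  rw [hg] at this
  simp only at this
  exact sub_eq_zero.1 this

lemma padicLog_injective (hy : ‖y - 1‖ < pr p) (hz : ‖z - 1‖ < pr p)
    (h : padicLog p y = padicLog p z) : y = z := by
  have hz1 : ‖z‖ = 1 := norm_eq_one_of (lt_of_lt_of_le hz pr_lt_one.le)
  have hz0 : z ≠ 0 := by
    intro h0
    rw [h0, norm_zero] at hz1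
    norm_num at hz1
  have hq : ‖y / z - 1‖ < pr p := by
    have h1 : y / z - 1 = (y - z) / z := by
      field_simp
    rw [h1, norm_div, hz1, div_one]
    calc ‖y - z‖ = ‖(y - 1) - (z - 1)‖ := by ring_nf
      _ ≤ max ‖y - 1‖ ‖z - 1‖ := norm_sub_le_max _ _
      _ < pr p := max_lt hy hz
  have hsplit : y = z * (y / z) := by
    field_simp
  have h2 : padicLog p y = padicLog p z + padicLog p (y / z) := by
    conv_lhs => rw [hsplit]
    exact padicLog_mul hz hq
  have h3 : padicLog p (y / z) = 0 := by
    rw [h] at h2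
    linear_combination -h2
  by_contra hne
  have hne' : y / z ≠ 1 := by
    intro h4
    apply hne
    field_simp at h4
    exact h4
  exact padicLog_ne_zero hq hne' h3

/-- The main algebraic identity : `exp (n * log Y) = Y ^ n`. -/
lemma padicExp_nat_mul_padicLog {Y : ℚ_[p]} (hY : ‖Y - 1‖ < pr p) (n : ℕ) :
    padicExp p ((n : ℚ_[p]) * padicLog p Y) = Y ^ n := by
  have hlogY : ‖padicLog p Y‖ < pr p := lt_of_le_of_lt (padicLog_norm_le hY) hY
  have hw : ‖(n : ℚ_[p]) * padicLog p Y‖ < pr p := by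
    rw [norm_mul]
    calc ‖((n : ℚ_[p]))‖ * ‖padicLog p Y‖ ≤ 1 * ‖padicLog p Y‖ :=
          mul_le_mul_of_nonneg_right (norm_natCast_le_one n) (norm_nonneg _)
      _ = ‖padicLog p Y‖ := one_mul _
      _ < pr p := hlogY
  have hE : ‖padicExp p ((n : ℚ_[p]) * padicLog p Y) - 1‖ < pr p :=
    lt_of_le_of_lt (padicExp_sub_one_norm_le hw) hw
  have hYn : ‖Y ^ n - 1‖ < pr p :=
    lt_of_le_of_lt (norm_pow_sub_one_le (lt_of_lt_of_le hY pr_lt_one.le) n) hY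
  apply padicLog_injective hE hYn
  rw [padicLog_padicExp hw, padicLog_pow hY n]


end PadicExpLog

/-- `p`-adic interpolation of an LRS: if `u n = Σᵢ qᵢ(n) λᵢⁿ` with the `λᵢ` `p`-adic
units and `v_p(λᵢᴺ - 1) > 1/(p-1)`, then for each `0 ≤ ℓ < N` the function
`f_ℓ(x) = Σᵢ qᵢ(Nx + ℓ) λᵢ^ℓ exp(x log λᵢᴺ)` is well defined on `ℤ_p` (the exponential
series converges there) and satisfies `f_ℓ(n) = u (N n + ℓ)` for all `n : ℕ`. -/
theorem stmt_18 (s : ℕ) (lam : Fin s → ℤ_[p]) (hlam : ∀ i, IsUnit (lam i))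
    (q : Fin s → Polynomial ℤ_[p]) (u : ℕ → ℤ)
    (hu : ∀ n : ℕ, (u n : ℚ_[p]) =
      ∑ i : Fin s, Polynomial.aeval (n : ℚ_[p]) (q i) * ((lam i : ℚ_[p])) ^ n)
    (N : ℕ) (hN : 1 ≤ N)
    (hval : ∀ i, ‖(lam i : ℚ_[p]) ^ N - 1‖ < (p : ℝ) ^ (-(1 : ℝ) / ((p : ℝ) - 1))) :
    ∀ ℓ : ℕ, ℓ < N →
      (∀ i : Fin s, ∀ x : ℤ_[p],
        Summable fun k : ℕ =>
          ((x : ℚ_[p]) * padicLog p ((lam i : ℚ_[p]) ^ N)) ^ k / (k.factorial : ℚ_[p])) ∧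
      (∀ n : ℕ,
        ∑ i : Fin s, Polynomial.aeval ((N * n + ℓ : ℕ) : ℚ_[p]) (q i)
            * ((lam i : ℚ_[p])) ^ ℓ
            * padicExp p ((n : ℚ_[p]) * padicLog p ((lam i : ℚ_[p]) ^ N))
          = (u (N * n + ℓ) : ℚ_[p])) := by
  intro ℓ hℓ
  have hval' : ∀ i, ‖((lam i : ℚ_[p])) ^ N - 1‖ < PadicExpLog.pr p := by
    intro i
    rw [PadicExpLog.pr]
    exact hval i
  constructor
  · intro i x
    apply PadicExpLog.summable_expTerm
    calc ‖(x : ℚ_[p]) * padicLog p ((lam i : ℚ_[p]) ^ N)‖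
        = ‖(x : ℚ_[p])‖ * ‖padicLog p ((lam i : ℚ_[p]) ^ N)‖ := norm_mul _ _
      _ ≤ 1 * ‖padicLog p ((lam i : ℚ_[p]) ^ N)‖ := by
          apply mul_le_mul_of_nonneg_right _ (norm_nonneg _)
          rw [PadicInt.padic_norm_e_of_padicInt]
          exact PadicInt.norm_le_one x
      _ = ‖padicLog p ((lam i : ℚ_[p]) ^ N)‖ := one_mul _
      _ ≤ ‖(lam i : ℚ_[p]) ^ N - 1‖ := PadicExpLog.padicLog_norm_le (hval' i)
      _ < PadicExpLog.pr p := hval' i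
  · intro n
    rw [hu (N * n + ℓ)]
    apply Finset.sum_congr rfl
    intro i _
    rw [PadicExpLog.padicExp_nat_mul_padicLog (hval' i) n,
      mul_assoc, ← pow_mul, ← pow_add, Nat.add_comm ℓ (N * n)]
end
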